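/- Let $\mu>0$, $\sigma\neq0$, $\gamma\in[1/2,1)$, $T>0$, and let $u^*_t = e^{\mu t}\left[\frac{e^{-2(1-\gamma)\mu t}-e^{-2(1-\gamma)\mu T}}{1-e^{-2(1-\gamma)\mu T}}\right]^{1/(1-\gamma)}$. Then $\frac{1}{2\sigma^2}\int_0^T \left(\frac{\dot u^*_t - \mu u^*_t}{(u^*_t)^{\gamma}}\right)^2 dt = \frac{\mu}{\sigma^2(1-\gamma)\left(1-e^{-2\mu(1-\gamma)T}\right)} = \frac{1}{2\int_0^T \sigma^2(1-\gamma)^2 e^{-2(1-\gamma)\mu s}\,ds}$. -/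

import Mathlib

open Real MeasureTheory

theorem rate_function_at_most_likely_path (μ σ γ T : ℝ) (hμ : 0 < μ) (hσ : σ ≠ 0)
    (hγ : γ ∈ Set.Ico (1/2 : ℝ) 1) (hT : 0 < T)
    (ustar : ℝ → ℝ)
    (hu : ∀ t, ustar t = Real.exp (μ*t) *
      ((Real.exp (-2*(1-γ)*μ*t) - Real.exp (-2*(1-γ)*μ*T)) /
        (1 - Real.exp (-2*(1-γ)*μ*T))) ^ (1/(1-γ))) :
    (1/(2*σ^2)) * (∫ t in (0:ℝ)..T,
        ((deriv ustar t - μ * ustar t) / (ustar t) ^ γ)^2)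
      = μ / (σ^2*(1-γ)*(1 - Real.exp (-2*μ*(1-γ)*T)))
    ∧ μ / (σ^2*(1-γ)*(1 - Real.exp (-2*μ*(1-γ)*T)))
      = 1 / (2 * ∫ s in (0:ℝ)..T, σ^2*(1-γ)^2 * Real.exp (-2*(1-γ)*μ*s)) := by
  obtain ⟨hγl, hγ1⟩ := hγ
  have h1γ : (0:ℝ) < 1 - γ := by linarith
  have hσ2 : (0:ℝ) < σ^2 := by positivity
  have hbpos : (0:ℝ) < 2*(1-γ)*μ := by positivity
  have hTarg : -2*μ*(1-γ)*T = -2*(1-γ)*μ*T := by ring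
  set D : ℝ := 1 - Real.exp (-2*(1-γ)*μ*T) with hDdef
  have hexpT : Real.exp (-2*(1-γ)*μ*T) < 1 := by
    rw [Real.exp_lt_one_iff]; nlinarith
  have hDpos : 0 < D := by rw [hDdef]; linarith
  set c : ℝ := 1/(1-γ) with hc
  have hcpos : 0 < c := by positivity
  have hcγ : c * γ = c - 1 := by rw [hc]; field_simp; ring
  set g : ℝ → ℝ := fun t => (Real.exp (-2*(1-γ)*μ*t) - Real.exp (-2*(1-γ)*μ*T)) / D with hg
  have hfun : ∀ t, ustar t = Real.exp (μ*t) * g t ^ c := fun t => hu t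
  -- the basic exp integral
  have hexpDeriv : ∀ t : ℝ, HasDerivAt (fun t => Real.exp (-2*(1-γ)*μ*t))
      (-2*(1-γ)*μ * Real.exp (-2*(1-γ)*μ*t)) t := by
    intro t
    have h1 : HasDerivAt (fun t : ℝ => -2*(1-γ)*μ*t) (-2*(1-γ)*μ) t := by
      simpa using (hasDerivAt_id t).const_mul (-2*(1-γ)*μ)
    simpa [mul_comm] using h1.exp
  have hInt : (∫ t in (0:ℝ)..T, Real.exp (-2*(1-γ)*μ*t)) = D / (2*(1-γ)*μ) := by
    have h : ∀ t : ℝ, HasDerivAt (fun t => Real.exp (-2*(1-γ)*μ*t) / (-2*(1-γ)*μ))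
        (Real.exp (-2*(1-γ)*μ*t)) t := by
      intro t
      have := (hexpDeriv t).div_const (-2*(1-γ)*μ)
      have hne : (-2*(1-γ)*μ) ≠ 0 := by intro h0; linarith [hbpos]
      convert this using 1
      · rfl
      · rfl
      · rw [eq_div_iff hne]; ring
    rw [intervalIntegral.integral_eq_sub_of_hasDerivAt (fun t _ => h t)
      ((Real.continuous_exp.comp (by continuity)).intervalIntegrable 0 T)]
    rw [hDdef]
    field_simp
    ring_nf; rw [Real.exp_zero]; ring
  -- pointwise identity on Ioo
  have key : ∀ t ∈ Set.Ioo (0:ℝ) T,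
      ((deriv ustar t - μ * ustar t) / (ustar t) ^ γ)^2
        = 4*μ^2/D^2 * Real.exp (-2*(1-γ)*μ*t) := by
    intro t ht
    have hgt : 0 < g t := by
      have : Real.exp (-2*(1-γ)*μ*T) < Real.exp (-2*(1-γ)*μ*t) := by
        apply Real.exp_lt_exp.2; nlinarith [ht.2]
      have : 0 < Real.exp (-2*(1-γ)*μ*t) - Real.exp (-2*(1-γ)*μ*T) := by linarith
      exact div_pos this hDpos
    have hgd : HasDerivAt g (-2*(1-γ)*μ * Real.exp (-2*(1-γ)*μ*t) / D) t := by
      have := ((hexpDeriv t).sub_const (Real.exp (-2*(1-γ)*μ*T))).div_const D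
      exact this
    have hpow : HasDerivAt (fun s => g s ^ c)
        ((-2*(1-γ)*μ * Real.exp (-2*(1-γ)*μ*t) / D) * c * g t ^ (c-1)) t :=
      hgd.rpow_const (Or.inl hgt.ne')
    have hexp : HasDerivAt (fun s => Real.exp (μ*s)) (μ * Real.exp (μ*t)) t := by
      have h1 : HasDerivAt (fun s : ℝ => μ*s) μ t := by
        simpa using (hasDerivAt_id t).const_mul μ
      simpa [mul_comm] using h1.exp
    have hU : HasDerivAt ustar
        (μ * Real.exp (μ*t) * g t ^ c
          + Real.exp (μ*t) * ((-2*(1-γ)*μ * Real.exp (-2*(1-γ)*μ*t) / D) * c * g t ^ (c-1))) t := by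
      have := hexp.mul hpow
      have hfeq : ustar = fun s => Real.exp (μ*s) * g s ^ c := funext hfun
      rw [hfeq]
      exact this
    have hden : (ustar t) ^ γ = Real.exp (γ*(μ*t)) * g t ^ (c-1) := by
      rw [hfun t, Real.mul_rpow (Real.exp_pos _).le (Real.rpow_nonneg hgt.le _),
        ← Real.exp_mul, ← Real.rpow_mul hgt.le, hcγ, mul_comm (μ*t) γ]
    have hGne : g t ^ (c-1) ≠ 0 := (Real.rpow_pos_of_pos hgt _).ne'
    have hratio : (deriv ustar t - μ * ustar t) / (ustar t) ^ γ
        = -(2*μ) * Real.exp (-(1-γ)*μ*t) / D := by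
      have h1 : deriv ustar t - μ * ustar t
          = Real.exp (μ*t) * ((-2*(1-γ)*μ) * Real.exp (-2*(1-γ)*μ*t) / D * c * g t ^ (c-1)) := by
        rw [hU.deriv, hfun t]; ring
      have hexps : Real.exp (μ*t) * Real.exp (-2*(1-γ)*μ*t)
          = Real.exp (γ*(μ*t)) * Real.exp (-(1-γ)*μ*t) := by
        rw [← Real.exp_add, ← Real.exp_add]; ring_nf
      have hc1 : c * (1-γ) = 1 := by rw [hc]; field_simp
      rw [h1, hden, div_eq_div_iff (by positivity) hDpos.ne']
      have hclear : Real.exp (μ*t) * ((-2*(1-γ)*μ) * Real.exp (-2*(1-γ)*μ*t) / D * c * g t ^ (c-1)) * D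
          = Real.exp (μ*t) * ((-2*(1-γ)*μ) * Real.exp (-2*(1-γ)*μ*t)) * c * g t ^ (c-1) := by
        field_simp
      rw [hclear]
      linear_combination (-2*(1-γ)*μ*c*g t ^ (c-1)) * hexps + (-2*μ*Real.exp (γ*(μ*t))*Real.exp (-(1-γ)*μ*t)*g t ^ (c-1)) * hc1
    rw [hratio]
    rw [div_pow, mul_pow, neg_pow, sq (Real.exp _), ← Real.exp_add]
    rw [show -(1-γ)*μ*t + -(1-γ)*μ*t = -2*(1-γ)*μ*t by ring]
    ring
  have hTne : ∀ᵐ x : ℝ, x ≠ T := by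
    rw [MeasureTheory.ae_iff]
    have h0 : (volume : Measure ℝ) {T} = 0 := measure_singleton T
    convert h0 using 2
    ext x; simp
  have hIeq : (∫ t in (0:ℝ)..T, ((deriv ustar t - μ * ustar t) / (ustar t) ^ γ)^2)
      = ∫ t in (0:ℝ)..T, 4*μ^2/D^2 * Real.exp (-2*(1-γ)*μ*t) := by
    apply intervalIntegral.integral_congr_ae
    filter_upwards [hTne] with x hx hxI
    rw [Set.uIoc_of_le hT.le] at hxI
    exact key x ⟨hxI.1, lt_of_le_of_ne hxI.2 hx⟩
  have hI2 : (∫ t in (0:ℝ)..T, 4*μ^2/D^2 * Real.exp (-2*(1-γ)*μ*t))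
      = 4*μ^2/D^2 * (D/(2*(1-γ)*μ)) := by
    rw [intervalIntegral.integral_const_mul, hInt]
  constructor
  · rw [hIeq, hI2, hTarg, ← hDdef]
    field_simp
    ring
  · rw [hTarg, ← hDdef]
    have h3 : (∫ s in (0:ℝ)..T, σ^2*(1-γ)^2 * Real.exp (-2*(1-γ)*μ*s))
        = σ^2*(1-γ)^2 * (D/(2*(1-γ)*μ)) := by
      rw [intervalIntegral.integral_const_mul, hInt]
    rw [h3]
    field_simp
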